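/- (Hayashi–Nagaoka inequality) Let S and T be positive semidefinite operators on a finite-dimensional Hilbert space with 0 ≤ S ≤ I, and let c > 0. Then I − (S+T)^{-1/2} S (S+T)^{-1/2} ≤ (1+c)(I−S) + (2+c+1/c)·T, where the inverse square root is taken on the support of S+T (generalized inverse). -/

import Mathlib

open Matrix BigOperators Classical ComplexOrder

noncomputable section

variable {n : Type*} [Fintype n] [DecidableEq n]

/-- positive-semidefinite square root, extended by 0. -/
noncomputable def msqrt (A : Matrix n n ℂ) : Matrix n n ℂ :=
  if h : A.PosSemidef then
    (h.1.eigenvectorUnitary : Matrix n n ℂ) * diagonal ((↑) ∘ Real.sqrt ∘ h.1.eigenvalues) *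
      (star (h.1.eigenvectorUnitary : Matrix n n ℂ)) else 0

/-- trace norm ‖X‖₁ = Tr √(XᴴX). -/
noncomputable def traceNorm (X : Matrix n n ℂ) : ℝ :=
  (msqrt (Xᴴ * X)).trace.re

/-- fidelity F(ρ,σ) = ‖√ρ√σ‖₁. -/
noncomputable def fidelity (ρ σ : Matrix n n ℂ) : ℝ :=
  traceNorm (msqrt ρ * msqrt σ)

/-- purified distance. -/
noncomputable def purifiedDist (ρ σ : Matrix n n ℂ) : ℝ :=
  Real.sqrt (1 - (fidelity ρ σ)^2)

def IsDensityMatrix (ρ : Matrix n n ℂ) : Prop := ρ.PosSemidef ∧ ρ.trace = 1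

/-- max-relative entropy. -/
noncomputable def Dmax (ρ σ : Matrix n n ℂ) : ℝ :=
  sInf {l : ℝ | ((((2:ℝ)^l : ℝ) : ℂ) • σ - ρ).PosSemidef}

/-- smooth hypothesis testing divergence. -/
noncomputable def DH (ε : ℝ) (ρ τ : Matrix n n ℂ) : ℝ :=
  sSup {r : ℝ | ∃ P : Matrix n n ℂ, P.PosSemidef ∧ ((1 : Matrix n n ℂ) - P).PosSemidef ∧
    1 - ε ≤ ((P * ρ).trace).re ∧ r = - Real.logb 2 ((P * τ).trace).re}

/-- functional calculus for hermitian matrices (0 otherwise). -/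
noncomputable def hermCFC (f : ℝ → ℝ) (A : Matrix n n ℂ) : Matrix n n ℂ :=
  if h : A.IsHermitian then
    (Matrix.IsHermitian.eigenvectorUnitary h : Matrix n n ℂ) *
      Matrix.diagonal (fun i => (f (h.eigenvalues i) : ℂ)) *
      (star (Matrix.IsHermitian.eigenvectorUnitary h : Matrix n n ℂ))
  else 0

/-- von Neumann entropy (base 2). -/
noncomputable def vnEntropy (ρ : Matrix n n ℂ) : ℝ :=
  if h : ρ.IsHermitian then -∑ i, (h.eigenvalues i) * Real.logb 2 (h.eigenvalues i) else 0

end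


set_option linter.unusedSectionVars false
set_option maxHeartbeats 1000000

section HNaux
open Matrix ComplexOrder MatrixOrder

variable {n : Type*} [Fintype n] [DecidableEq n]

lemma smul_posSemidef {A : Matrix n n ℂ} (hA : A.PosSemidef) {r : ℝ} (hr : 0 ≤ r) :
    ((r : ℂ) • A).PosSemidef := by
  refine posSemidef_iff_dotProduct_mulVec.mpr ⟨?_, ?_⟩
  · have : ((r:ℂ) • A)ᴴ = star (r:ℂ) • Aᴴ := conjTranspose_smul _ _
    rw [Matrix.IsHermitian, this, hA.1, Complex.star_def, Complex.conj_ofReal]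
  · intro x
    rw [smul_mulVec, dotProduct_smul, smul_eq_mul]
    exact mul_nonneg (by exact_mod_cast hr) (hA.dotProduct_mulVec_nonneg x)

lemma diag_nonneg {A : Matrix n n ℂ} (hA : A.PosSemidef) (j : n) : 0 ≤ A j j := by
  simpa [dotProduct, mulVec, Pi.single_apply, Finset.sum_ite_eq, Finset.sum_ite_eq'] using hA.dotProduct_mulVec_nonneg (Pi.single j 1)

lemma sub_posSemidef_of_sq {A B : Matrix n n ℂ} (hA : A.PosSemidef) (hB : B.PosSemidef)
    (h : (B * B - A * A).PosSemidef) : (B - A).PosSemidef := by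
  have hH : (B - A).IsHermitian := hB.1.sub hA.1
  refine hH.posSemidef_iff_eigenvalues_nonneg.mpr fun i => ?_
  show 0 ≤ hH.eigenvalues i
  by_contra hlt
  push_neg at hlt
  set t : ℝ := hH.eigenvalues i with ht
  set v : n → ℂ := ⇑(hH.eigenvectorBasis i) with hv
  have hv' : (B - A) *ᵥ v = t • v := hH.mulVec_eigenvectorBasis i
  have hvne : v ≠ 0 := by
    have h0 := (hH.eigenvectorBasis).orthonormal.ne_zero i
    intro hz
    apply h0
    ext j
    exact congrFun hz j
  have key : star v ⬝ᵥ (B * B - A * A) *ᵥ v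
      = (t : ℂ) * (star v ⬝ᵥ B *ᵥ v + star v ⬝ᵥ A *ᵥ v) := by
    calc star v ⬝ᵥ (B * B - A * A) *ᵥ v
        = star v ⬝ᵥ B *ᵥ (B - A) *ᵥ v + star v ⬝ᵥ (B - A) *ᵥ A *ᵥ v := by
          rw [mulVec_mulVec, mulVec_mulVec, ← dotProduct_add, ← add_mulVec]
          congr 2
          noncomm_ring
      _ = (t : ℂ) * (star v ⬝ᵥ B *ᵥ v) + (star v) ᵥ* (B - A)ᴴ ⬝ᵥ A *ᵥ v := by
          rw [hv', mulVec_smul, dotProduct_smul, RCLike.real_smul_eq_coe_mul,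
            dotProduct_mulVec _ (B - A), hH.eq]
          rfl
      _ = (t : ℂ) * (star v ⬝ᵥ B *ᵥ v + star v ⬝ᵥ A *ᵥ v) := by
          have hsv : star v ᵥ* (B - A) = t • star v := by
            rw [← hH.eq, ← star_mulVec, hv', star_smul, star_trivial]
          rw [hH.eq, hsv, smul_dotProduct, RCLike.real_smul_eq_coe_mul, mul_add]
          rfl
  have hqB : 0 ≤ star v ⬝ᵥ B *ᵥ v := hB.dotProduct_mulVec_nonneg v
  have hqA : 0 ≤ star v ⬝ᵥ A *ᵥ v := hA.dotProduct_mulVec_nonneg v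
  have hpos : 0 ≤ (t : ℂ) * (star v ⬝ᵥ B *ᵥ v + star v ⬝ᵥ A *ᵥ v) := key ▸ h.dotProduct_mulVec_nonneg v
  have htC : (t : ℂ) < 0 := by exact_mod_cast hlt
  have hsum : star v ⬝ᵥ B *ᵥ v + star v ⬝ᵥ A *ᵥ v = 0 := by
    have h1 : 0 ≤ star v ⬝ᵥ B *ᵥ v + star v ⬝ᵥ A *ᵥ v := add_nonneg hqB hqA
    have h2 : (t : ℂ) * (star v ⬝ᵥ B *ᵥ v + star v ⬝ᵥ A *ᵥ v) ≤ 0 :=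
      mul_nonpos_of_nonpos_of_nonneg htC.le h1
    have h3 := le_antisymm h2 hpos
    rcases mul_eq_zero.mp h3 with h4 | h4
    · exact absurd h4 (ne_of_lt htC)
    · exact h4
  have hqB0 : star v ⬝ᵥ B *ᵥ v = 0 :=
    le_antisymm (by rw [← hsum]; exact le_add_of_nonneg_right hqA) hqB
  have hqA0 : star v ⬝ᵥ A *ᵥ v = 0 := by
    have h5 := hsum
    rw [hqB0, zero_add] at h5
    exact h5
  have hBv : B *ᵥ v = 0 := (hB.dotProduct_mulVec_zero_iff v).mp hqB0
  have hAv : A *ᵥ v = 0 := (hA.dotProduct_mulVec_zero_iff v).mp hqA0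
  have hz : t • v = 0 := by rw [← hv', sub_mulVec, hBv, hAv, sub_zero]
  rcases smul_eq_zero.mp hz with h4 | h4
  · exact absurd h4 (ne_of_lt hlt)
  · exact hvne h4


lemma key_diag (d : n → ℝ) (hd : ∀ i, 0 ≤ d i)
    (S T : Matrix n n ℂ) (hS : S.PosSemidef) (hT : T.PosSemidef)
    (hS1 : ((1 : Matrix n n ℂ) - S).PosSemidef)
    (hST : S + T = Matrix.diagonal (fun i => ((d i : ℝ) : ℂ)))
    (c : ℝ) (hc : 0 < c)
    (P : Matrix n n ℂ)
    (hP : P = Matrix.diagonal (fun i => (((if d i = 0 then 0 else 1 / Real.sqrt (d i)) : ℝ) : ℂ))) :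
    (((1 + c : ℝ) : ℂ) • ((1 : Matrix n n ℂ) - S) + ((2 + c + 1 / c : ℝ) : ℂ) • T
      - ((1 : Matrix n n ℂ) - P * S * P)).PosSemidef := by
  set ν : n → ℂ := fun i => if d i = 0 then 0 else 1 with hν
  set m : n → ℂ := fun i => ((Real.sqrt (d i) : ℝ) : ℂ) with hm
  set Pi : Matrix n n ℂ := Matrix.diagonal ν with hPi
  set N : Matrix n n ℂ := Matrix.diagonal m with hN
  set D : Matrix n n ℂ := Matrix.diagonal (fun i => ((d i : ℝ) : ℂ)) with hD
  -- scalar facts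
  have hsq : ∀ i, (Real.sqrt (d i) : ℂ) * (Real.sqrt (d i) : ℂ) = ((d i : ℝ) : ℂ) := by
    intro i
    rw [← Complex.ofReal_mul, Real.mul_self_sqrt (hd i)]
  have hscal1 : ∀ i, (((if d i = 0 then 0 else 1 / Real.sqrt (d i)) : ℝ) : ℂ) * ((d i : ℝ) : ℂ) = m i := by
    intro i
    by_cases h0 : d i = 0
    · simp [hm, h0]
    · simp only [hm, if_neg h0]
      rw [← Complex.ofReal_mul, one_div, inv_mul_eq_div, Real.div_sqrt]
  have hscal2 : ∀ i, (((if d i = 0 then 0 else 1 / Real.sqrt (d i)) : ℝ) : ℂ) * m i = ν i := by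
    intro i
    by_cases h0 : d i = 0
    · simp [hm, hν, h0]
    · have hpos : 0 < d i := lt_of_le_of_ne (hd i) (Ne.symm h0)
      have hs0 : Real.sqrt (d i) ≠ 0 := (Real.sqrt_pos.mpr hpos).ne'
      simp only [hm, hν, if_neg h0]
      rw [← Complex.ofReal_mul, one_div_mul_cancel hs0, Complex.ofReal_one]
  -- basic diagonal identities
  have hPD : P * D = N := by
    rw [hP, hD, hN, diagonal_mul_diagonal]
    exact congrArg _ (funext hscal1)
  have hDP : D * P = N := by
    rw [hP, hD, hN, diagonal_mul_diagonal]
    refine congrArg _ (funext fun i => ?_)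
    rw [mul_comm]
    exact hscal1 i
  have hPN : P * N = Pi := by
    rw [hP, hN, hPi, diagonal_mul_diagonal]
    exact congrArg _ (funext hscal2)
  have hPDP : P * D * P = Pi := by
    rw [hPD, hN, hP, hPi, diagonal_mul_diagonal]
    refine congrArg _ (funext fun i => ?_)
    rw [mul_comm]
    exact hscal2 i
  have hNN : N * N = D := by
    rw [hN, hD, diagonal_mul_diagonal]
    exact congrArg _ (funext hsq)
  have hPiPi : Pi * Pi = Pi := by
    rw [hPi, diagonal_mul_diagonal]
    refine congrArg _ (funext fun i => ?_)
    by_cases h0 : d i = 0 <;> simp [hν, h0]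
  -- conjTranspose facts
  have hPh : Pᴴ = P := by
    rw [hP, diagonal_conjTranspose]
    refine congrArg _ (funext fun i => ?_)
    simp [Complex.star_def, Complex.conj_ofReal]
  have hPih : Piᴴ = Pi := by
    rw [hPi, diagonal_conjTranspose]
    refine congrArg _ (funext fun i => ?_)
    by_cases h0 : d i = 0 <;> simp [hν, h0]
  have hNh : Nᴴ = N := by
    rw [hN, diagonal_conjTranspose]
    refine congrArg _ (funext fun i => ?_)
    simp [hm, Complex.star_def, Complex.conj_ofReal]
  -- square root of T and support facts
  set W : Matrix n n ℂ := CFC.sqrt T with hWdef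
  have hWW : W * W = T := CFC.sqrt_mul_sqrt_self T hT.nonneg
  have hWh : Wᴴ = W := (Matrix.nonneg_iff_posSemidef.mp (CFC.sqrt_nonneg T)).1
  clear_value W
  have hTjj : ∀ j, d j = 0 → T j j = 0 := by
    intro j h0
    have hsum : S j j + T j j = 0 := by
      have h1 := congrFun (congrFun hST j) j
      simpa [hD, Matrix.add_apply, Matrix.diagonal_apply_eq, h0] using h1
    have h1 : 0 ≤ S j j := diag_nonneg hS j
    have h2 : 0 ≤ T j j := diag_nonneg hT j
    have h3 : S j j = -(T j j) := eq_neg_of_add_eq_zero_left hsum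
    rw [h3] at h1
    exact le_antisymm (neg_nonneg.mp h1) h2
  have hWrow : ∀ j k, d j = 0 → W j k = 0 := by
    intro j k h0
    have hTW : T j j = ∑ l, W j l * star (W j l) := by
      rw [← hWW, Matrix.mul_apply]
      refine Finset.sum_congr rfl fun l _ => ?_
      congr 1
      conv_lhs => rw [← hWh]
      rw [conjTranspose_apply]
    have hz := hTjj j h0
    rw [hTW] at hz
    have hnn : ∀ l ∈ Finset.univ, 0 ≤ W j l * star (W j l) :=
      fun l _ => mul_star_self_nonneg _
    have h5 := (Finset.sum_eq_zero_iff_of_nonneg hnn).mp hz k (Finset.mem_univ k)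
    have h6 : W j k * star (W j k) = ((Complex.normSq (W j k) : ℝ) : ℂ) := by
      rw [Complex.star_def, Complex.mul_conj]
    rw [h6] at h5
    exact Complex.normSq_eq_zero.mp (by exact_mod_cast h5)
  have h1Pi : (1 : Matrix n n ℂ) - Pi = Matrix.diagonal (fun i => 1 - ν i) := by
    rw [hPi, ← Matrix.diagonal_one, Matrix.diagonal_sub]
  have hWPi : W * ((1 : Matrix n n ℂ) - Pi) = 0 := by
    ext i j
    rw [h1Pi, Matrix.mul_diagonal, Matrix.zero_apply]
    by_cases h0 : d j = 0
    · have hij : W i j = 0 := by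
        conv_lhs => rw [← hWh]
        rw [conjTranspose_apply, hWrow j i h0, star_zero]
      rw [hij, zero_mul]
    · simp [hν, h0]
  have hPiW : ((1 : Matrix n n ℂ) - Pi) * W = 0 := by
    ext i j
    rw [h1Pi, Matrix.diagonal_mul, Matrix.zero_apply]
    by_cases h0 : d i = 0
    · rw [hWrow i j h0, mul_zero]
    · simp [hν, h0]
  -- the completion-of-squares players
  set Y : Matrix n n ℂ := P - 1 with hY
  have hYh : Yᴴ = Y := by rw [hY, conjTranspose_sub, hPh, conjTranspose_one]
  clear_value Y
  set A1 : Matrix n n ℂ := (1 - Pi) + Y * W with hA1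
  have hA1h : A1ᴴ = (1 - Pi) + W * Y := by
    rw [hA1, conjTranspose_add, conjTranspose_sub, conjTranspose_one, hPih, conjTranspose_mul,
      hWh, hYh]
  clear_value A1
  set σ : ℝ := Real.sqrt c with hσ
  have hσne : σ ≠ 0 := by rw [hσ]; exact (Real.sqrt_pos.mpr hc).ne'
  have hσ2 : ((σ:ℝ):ℂ) * ((σ:ℝ):ℂ) = ((c:ℝ):ℂ) := by
    rw [← Complex.ofReal_mul, hσ, Real.mul_self_sqrt hc.le]
  have hσi : ((σ:ℝ):ℂ) * ((σ⁻¹:ℝ):ℂ) = 1 := by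
    rw [← Complex.ofReal_mul, mul_inv_cancel₀ hσne, Complex.ofReal_one]
  have hσi' : ((σ⁻¹:ℝ):ℂ) * ((σ:ℝ):ℂ) = 1 := by rw [mul_comm]; exact hσi
  have hσii : ((σ⁻¹:ℝ):ℂ) * ((σ⁻¹:ℝ):ℂ) = ((1/c:ℝ):ℂ) := by
    rw [← Complex.ofReal_mul, ← mul_inv, hσ, Real.mul_self_sqrt hc.le, one_div]
  clear_value σ
  set Z : Matrix n n ℂ := ((σ:ℝ):ℂ) • A1 - ((σ⁻¹:ℝ):ℂ) • W with hZ
  have hZh : Zᴴ = ((σ:ℝ):ℂ) • ((1 - Pi) + W * Y) - ((σ⁻¹:ℝ):ℂ) • W := by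
    simp only [hZ, conjTranspose_sub, conjTranspose_smul, hA1h, hWh, RCLike.star_def,
      Complex.conj_ofReal]
  clear_value Z
  have hA1W : A1 * W = Y * T := by rw [hA1, add_mul, hPiW, zero_add, mul_assoc, hWW]
  have hWA1 : W * ((1 - Pi) + W * Y) = T * Y := by rw [mul_add, hWPi, zero_add, ← mul_assoc, hWW]
  have e1 : ((1:Matrix n n ℂ) - Pi) * (1 - Pi) = 1 - Pi := by
    rw [sub_mul, one_mul, mul_sub, mul_one, hPiPi, sub_self, sub_zero]
  have hA1A1 : A1 * ((1 - Pi) + W * Y) = (1 - Pi) + Y * T * Y := by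
    rw [hA1, add_mul, mul_add, mul_add, e1]
    have e2 : ((1:Matrix n n ℂ) - Pi) * (W * Y) = 0 := by rw [← mul_assoc, hPiW, zero_mul]
    have e3 : Y * W * (1 - Pi) = 0 := by rw [mul_assoc, hWPi, mul_zero]
    have e4 : Y * W * (W * Y) = Y * T * Y := by
      rw [mul_assoc, ← mul_assoc W W Y, hWW, ← mul_assoc]
    rw [e2, e3, e4, add_zero, zero_add]
  have hZZ : Z * Zᴴ = ((c:ℝ):ℂ) • ((1 - Pi) + Y * T * Y) - Y * T - T * Y + ((1/c:ℝ):ℂ) • T := by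
    rw [hZh, hZ, sub_mul, mul_sub, mul_sub]
    simp only [smul_mul_assoc, mul_smul_comm, smul_smul]
    rw [hA1A1, hA1W, hWA1, hWW, hσ2, hσi, hσi', hσii, one_smul]
    module
  -- elimination identities
  have hPST : P * S + P * T = N := by rw [← mul_add, hST, hPD]
  have hSTP : S * P + T * P = N := by rw [← add_mul, hST, hDP]
  have hPSTP : P * S * P + P * T * P = Pi := by
    rw [← add_mul, ← mul_add, hST, hPDP]
  have hPTP : P * T * P = Pi - P * S * P := by rw [← hPSTP]; abel
  have hPT : P * T = N - P * S := by rw [← hPST]; abel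
  have hTP : T * P = N - S * P := by rw [← hSTP]; abel
  have hYTY : Y * T * Y = P * T * P - P * T - T * P + T := by rw [hY]; noncomm_ring
  have hYSY : Y * S * Y = P * S * P - P * S - S * P + S := by rw [hY]; noncomm_ring
  rw [hPTP, hPT, hTP] at hYTY
  have hYT2 : Y * T = N - P * S - T := by rw [hY, sub_mul, one_mul, hPT]
  have hTY2 : T * Y = N - S * P - T := by rw [hY, mul_sub, mul_one, hTP]
  have hcC : (c:ℂ) ≠ 0 := Complex.ofReal_ne_zero.mpr hc.ne'
  -- the key identity
  have hkey : ((1 + c : ℝ) : ℂ) • ((1 : Matrix n n ℂ) - S) + ((2 + c + 1 / c : ℝ) : ℂ) • T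
      - ((1 : Matrix n n ℂ) - P * S * P)
      = Z * Zᴴ + ((1 + c : ℝ) : ℂ) • (Y * S * Y) + ((2 + 2*c : ℝ) : ℂ) • (N - S) := by
    rw [hZZ, hYTY, hYSY, hYT2, hTY2]
    match_scalars <;> (push_cast; ring)
  rw [hkey]
  -- positivity of the three summands
  have hZZpsd : (Z * Zᴴ).PosSemidef := posSemidef_self_mul_conjTranspose Z
  have hYSYpsd : (Y * S * Y).PosSemidef := by
    have h8 := hS.mul_mul_conjTranspose_same Y
    rw [hYh] at h8
    exact h8
  -- N - S is PSD
  set Q : Matrix n n ℂ := CFC.sqrt S with hQ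
  have hQQ : Q * Q = S := CFC.sqrt_mul_sqrt_self S hS.nonneg
  have hQh : Qᴴ = Q := (Matrix.nonneg_iff_posSemidef.mp (CFC.sqrt_nonneg S)).1
  clear_value Q
  have hQSQ : Q * S * Q = S * S := by rw [← hQQ]; noncomm_ring
  have hSsub : Q * (1 - S) * Q = S - S * S := by
    rw [mul_sub, mul_one, sub_mul, hQQ, hQSQ]
  have hNSsq : N * N - S * S = T + Q * (1 - S) * Q := by
    rw [hNN, ← hST, hSsub]
    abel
  have hNpsd : N.PosSemidef := by
    rw [hN]
    refine posSemidef_diagonal_iff.mpr fun i => ?_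
    simp only [hm]
    exact Complex.zero_le_real.mpr (Real.sqrt_nonneg _)
  have hNSpsd : (N - S).PosSemidef := by
    refine sub_posSemidef_of_sq hS hNpsd ?_
    rw [hNSsq]
    refine hT.add ?_
    have h9 := hS1.mul_mul_conjTranspose_same Q
    rw [hQh] at h9
    exact h9
  exact (hZZpsd.add (smul_posSemidef hYSYpsd (by linarith))).add
    (smul_posSemidef hNSpsd (by linarith))

end HNaux

open Matrix ComplexOrder in
/-- Hayashi–Nagaoka inequality:
`I − (S+T)^{-1/2} S (S+T)^{-1/2} ≤ (1+c)(I−S) + (2+c+1/c)·T` in the Loewner order,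
where the inverse square root is the generalized (Moore–Penrose) inverse square root,
realized via the hermitian functional calculus with `t ↦ 1/√t` (and `0 ↦ 0`). -/
theorem hayashi_nagaoka {n : Type*} [Fintype n] [DecidableEq n]
    (S T : Matrix n n ℂ) (hS : S.PosSemidef) (hS1 : ((1 : Matrix n n ℂ) - S).PosSemidef)
    (hT : T.PosSemidef) (c : ℝ) (hc : 0 < c) :
    (((1 + c : ℝ) : ℂ) • ((1 : Matrix n n ℂ) - S) + ((2 + c + 1 / c : ℝ) : ℂ) • T
      - ((1 : Matrix n n ℂ)
          - hermCFC (fun t => if t = 0 then 0 else 1 / Real.sqrt t) (S + T) * S *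
            hermCFC (fun t => if t = 0 then 0 else 1 / Real.sqrt t) (S + T))).PosSemidef := by
  classical
  have hSTpsd : (S + T).PosSemidef := hS.add hT
  have h : (S + T).IsHermitian := hSTpsd.1
  set U : Matrix n n ℂ := (Matrix.IsHermitian.eigenvectorUnitary h : Matrix n n ℂ) with hU
  have hU1 : U * star U = 1 :=
    Matrix.mem_unitaryGroup_iff.mp (Matrix.IsHermitian.eigenvectorUnitary h).2
  have hU2 : star U * U = 1 :=
    Matrix.mem_unitaryGroup_iff'.mp (Matrix.IsHermitian.eigenvectorUnitary h).2
  set dg : n → ℝ := h.eigenvalues with hdg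
  set Pd : Matrix n n ℂ :=
    Matrix.diagonal (fun i => (((if dg i = 0 then 0 else 1 / Real.sqrt (dg i)) : ℝ) : ℂ)) with hPd
  have hherm : hermCFC (fun t => if t = 0 then 0 else 1 / Real.sqrt t) (S + T)
      = U * Pd * star U := by
    rw [hermCFC, dif_pos h]
  set S' : Matrix n n ℂ := star U * S * U with hS'def
  set T' : Matrix n n ℂ := star U * T * U with hT'def
  have hS' : S'.PosSemidef := by
    have h1 := hS.conjTranspose_mul_mul_same U
    rwa [← star_eq_conjTranspose] at h1
  have hT' : T'.PosSemidef := by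
    have h1 := hT.conjTranspose_mul_mul_same U
    rwa [← star_eq_conjTranspose] at h1
  have hS1' : ((1 : Matrix n n ℂ) - S').PosSemidef := by
    have h1 := hS1.conjTranspose_mul_mul_same U
    rw [← star_eq_conjTranspose] at h1
    have he : star U * (1 - S) * U = 1 - S' := by
      calc star U * (1 - S) * U = star U * U - star U * S * U := by noncomm_ring
        _ = 1 - S' := by rw [hU2, hS'def]
    rwa [he] at h1
  have hST' : S' + T' = Matrix.diagonal (fun i => ((dg i : ℝ) : ℂ)) := by
    have hsum : S' + T' = star U * (S + T) * U := by
      rw [hS'def, hT'def]; noncomm_ring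
    rw [hsum]
    have hspec := h.spectral_theorem
    rw [Unitary.conjStarAlgAut_apply] at hspec
    calc star U * (S + T) * U
        = star U * (U * diagonal (RCLike.ofReal ∘ h.eigenvalues) * star U) * U :=
          congrArg (fun X => star U * X * U) hspec
      _ = (star U * U) * diagonal (RCLike.ofReal ∘ h.eigenvalues) * (star U * U) := by
          noncomm_ring
      _ = Matrix.diagonal (fun i => ((dg i : ℝ) : ℂ)) := by
          rw [hU2, one_mul, mul_one]; rfl
  have hd : ∀ i, 0 ≤ dg i := hSTpsd.eigenvalues_nonneg
  have hkd := key_diag dg hd S' T' hS' hT' hS1' hST' c hc Pd hPd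
  have hpsd := hkd.mul_mul_conjTranspose_same U
  rw [← star_eq_conjTranspose] at hpsd
  -- transport back
  have hA : ∀ A : Matrix n n ℂ, U * (star U * A * U) * star U = A := by
    intro A
    calc U * (star U * A * U) * star U = (U * star U) * A * (U * star U) := by noncomm_ring
      _ = A := by rw [hU1, one_mul, mul_one]
  have hU1S : U * ((1 : Matrix n n ℂ) - S') * star U = 1 - S := by
    calc U * ((1 : Matrix n n ℂ) - S') * star U
        = U * star U - U * (star U * S * U) * star U := by rw [hS'def]; noncomm_ring
      _ = 1 - S := by rw [hU1, hA S]
  have hUT : U * T' * star U = T := by rw [hT'def, hA T]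
  have hU1P : U * ((1 : Matrix n n ℂ) - Pd * S' * Pd) * star U
      = 1 - (U * Pd * star U) * S * (U * Pd * star U) := by
    have hmid : U * (Pd * S' * Pd) * star U
        = (U * Pd * star U) * S * (U * Pd * star U) := by
      rw [hS'def]; noncomm_ring
    calc U * ((1 : Matrix n n ℂ) - Pd * S' * Pd) * star U
        = U * star U - U * (Pd * S' * Pd) * star U := by noncomm_ring
      _ = 1 - (U * Pd * star U) * S * (U * Pd * star U) := by rw [hU1, hmid]
  have hfinal : U * (((1 + c : ℝ) : ℂ) • ((1 : Matrix n n ℂ) - S')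
        + ((2 + c + 1 / c : ℝ) : ℂ) • T' - ((1 : Matrix n n ℂ) - Pd * S' * Pd)) * star U
      = ((1 + c : ℝ) : ℂ) • ((1 : Matrix n n ℂ) - S) + ((2 + c + 1 / c : ℝ) : ℂ) • T
        - ((1 : Matrix n n ℂ)
            - (U * Pd * star U) * S * (U * Pd * star U)) := by
    have hdist : U * (((1 + c : ℝ) : ℂ) • ((1 : Matrix n n ℂ) - S')
          + ((2 + c + 1 / c : ℝ) : ℂ) • T' - ((1 : Matrix n n ℂ) - Pd * S' * Pd)) * star U
        = ((1 + c : ℝ) : ℂ) • (U * ((1 : Matrix n n ℂ) - S') * star U)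
          + ((2 + c + 1 / c : ℝ) : ℂ) • (U * T' * star U)
          - (U * ((1 : Matrix n n ℂ) - Pd * S' * Pd) * star U) := by
      simp only [Matrix.add_mul, Matrix.sub_mul, Matrix.mul_add, Matrix.mul_sub,
        mul_smul_comm, smul_mul_assoc]
    rw [hdist, hU1S, hUT, hU1P]
  rw [hherm, ← hfinal]
  exact hpsd
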